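/- Let A be an idempotented algebra and e ∈ A a left special and left split idempotent. Then for every non-degenerate A-module M, the short exact sequence 0 → AeM → M → M/AeM → 0 splits, so M ≅ AeM ⊕ M/AeM. Consequently the category of non-degenerate A-modules decomposes as the direct sum of M(A)_e = {M | M = AeM} and M(A)_e^⊥ = {M | eM = 0}. -/

import Mathlib

open scoped TensorProduct

set_option linter.unusedSectionVars false

universe u

section Setup

variable (K : Type u) [CommRing K]
variable (A : Type u) [NonUnitalRing A] [Module K A]
  [SMulCommClass K A A] [IsScalarTower K A A]

/-- A (not necessarily non-degenerate) left module over the non-unital `K`-algebra `A`: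
an abelian group with compatible `K`- and `A`-actions, the `A`-action being `K`-bilinear. -/
class NUMod (M : Type u) [AddCommGroup M] [Module K M] extends SMul A M where
  asmul_add : ∀ (a : A) (m n : M), a • (m + n) = a • m + a • n
  add_asmul : ∀ (a b : A) (m : M), (a + b) • m = a • m + b • m
  mul_asmul : ∀ (a b : A) (m : M), (a * b) • m = a • (b • m)
  asmul_ksmul : ∀ (k : K) (a : A) (m : M), a • (k • m) = k • (a • m)
  ksmul_asmul : ∀ (k : K) (a : A) (m : M), (k • a) • m = k • (a • m)

/-- `A` is an idempotented algebra. -/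
def Idempotented : Prop :=
  (∀ a : A, ∃ e : A, e * e = e ∧ e * a = a ∧ a * e = a) ∧
  ∀ e₁ e₂ : A, e₁ * e₁ = e₁ → e₂ * e₂ = e₂ →
    ∃ e : A, e * e = e ∧ e * e₁ = e₁ ∧ e₁ * e = e₁ ∧ e * e₂ = e₂ ∧ e₂ * e = e₂

/-- A module is non-degenerate if every element is fixed by some idempotent of `A`. -/
def Nondeg (M : Type u) [AddCommGroup M] [Module K M] [NUMod K A M] : Prop :=
  ∀ m : M, ∃ e : A, e * e = e ∧ e • m = m

/-- A `K`-submodule which is stable under the `A`-action, i.e. an `A`-submodule. -/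
def AStable {M : Type u} [AddCommGroup M] [Module K M] [NUMod K A M]
    (S : Submodule K M) : Prop :=
  ∀ a : A, ∀ m ∈ S, a • m ∈ S

/-- `A`-linearity of a `K`-linear map between `A`-modules. -/
def IsAMap {M N : Type u} [AddCommGroup M] [Module K M] [NUMod K A M]
    [AddCommGroup N] [Module K N] [NUMod K A N] (f : M →ₗ[K] N) : Prop :=
  ∀ (a : A) (m : M), f (a • m) = a • f m

theorem asmul_zero {M : Type u} [AddCommGroup M] [Module K M] [NUMod K A M] (a : A) :
    a • (0 : M) = 0 := by
  have h := NUMod.asmul_add (K := K) (A := A) a (0 : M) 0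
  rw [add_zero] at h
  exact add_left_cancel (show a • (0 : M) + a • (0 : M) = a • (0 : M) + 0 by
    rw [add_zero]; exact h.symm)

variable {A}

/-- The subset `eM = {e m : m ∈ M}` of a module `M`, as a `K`-submodule. -/
def eSub (e : A) (M : Type u) [AddCommGroup M] [Module K M] [NUMod K A M] :
    Submodule K M where
  carrier := {m : M | ∃ n : M, e • n = m}
  zero_mem' := ⟨0, asmul_zero K A e⟩
  add_mem' := by
    rintro x y ⟨m, rfl⟩ ⟨n, rfl⟩
    exact ⟨m + n, NUMod.asmul_add e m n⟩
  smul_mem' := by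
    rintro k x ⟨m, rfl⟩
    exact ⟨k • m, NUMod.asmul_ksmul k e m⟩

/-- The submodule `AeM` of `M` generated by the elements `a • (e • m)`. -/
def aeSpan (e : A) (M : Type u) [AddCommGroup M] [Module K M] [NUMod K A M] :
    Submodule K M :=
  Submodule.span K {x : M | ∃ (a : A) (m : M), a • (e • m) = x}

/-- The left ideal `Ae = {a e : a ∈ A}` (for an idempotent `e`), as a `K`-submodule of `A`. -/
def leftIdeal (e : A) : Submodule K A where
  carrier := {x : A | ∃ a : A, a * e = x}
  zero_mem' := ⟨0, zero_mul e⟩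
  add_mem' := by
    rintro x y ⟨a, rfl⟩ ⟨b, rfl⟩
    exact ⟨a + b, add_mul a b e⟩
  smul_mem' := by
    rintro k x ⟨a, rfl⟩
    exact ⟨k • a, smul_mul_assoc k a e⟩

/-- The right ideal `eA = {e a : a ∈ A}` (for an idempotent `e`), as a `K`-submodule of `A`. -/
def rightIdeal (e : A) : Submodule K A where
  carrier := {x : A | ∃ a : A, e * a = x}
  zero_mem' := ⟨0, mul_zero e⟩
  add_mem' := by
    rintro x y ⟨a, rfl⟩ ⟨b, rfl⟩
    exact ⟨a + b, mul_add e a b⟩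
  smul_mem' := by
    rintro k x ⟨a, rfl⟩
    exact ⟨k • a, mul_smul_comm k e a⟩

/-- The `A`-balancing relations inside `eA ⊗_K M`, whose quotient is `eA ⊗_A M`. -/
def brel (e : A) (M : Type u) [AddCommGroup M] [Module K M] [NUMod K A M] :
    Submodule K (↥(rightIdeal K e) ⊗[K] M) :=
  Submodule.span K {z : ↥(rightIdeal K e) ⊗[K] M |
    ∃ (x y : ↥(rightIdeal K e)) (a : A) (m : M),
      (y : A) = (x : A) * a ∧ z = y ⊗ₜ[K] m - x ⊗ₜ[K] (a • m)}

/-- The `A`-balancing relations inside `eA ⊗_K S` for a `K`-submodule `S ≤ M`. -/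
def brelSub (e : A) {M : Type u} [AddCommGroup M] [Module K M] [NUMod K A M]
    (S : Submodule K M) : Submodule K (↥(rightIdeal K e) ⊗[K] ↥S) :=
  Submodule.span K {z : ↥(rightIdeal K e) ⊗[K] ↥S |
    ∃ (x y : ↥(rightIdeal K e)) (a : A) (m m' : ↥S),
      (y : A) = (x : A) * a ∧ (m' : M) = a • (m : M) ∧ z = y ⊗ₜ[K] m - x ⊗ₜ[K] m'}

variable (A)

/-- An idempotent `e` is left special if the class of non-degenerate modules `M` with
`M = AeM` is closed under subquotients: for `A`-stable submodules `Ksub ≤ H` of such an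
`M`, the subquotient `H/Ksub` is again generated by its `e`-fixed vectors. -/
def LeftSpecial (e : A) : Prop :=
  ∀ (X : Type u) [AddCommGroup X] [Module K X] [NUMod K A X],
    Nondeg K A X → aeSpan K e X = ⊤ →
    ∀ Ksub H : Submodule K X, AStable K A Ksub → AStable K A H → Ksub ≤ H →
      H ≤ Ksub ⊔ Submodule.span K {x : X | ∃ a : A, ∃ m ∈ H, a • (e • m) = x}

end Setup

section Split

variable (K : Type u) [CommRing K]
variable (A : Type u) [NonUnitalRing A] [Module K A]
  [SMulCommClass K A A] [IsScalarTower K A A]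

/-- `I` is an injective object of the full subcategory `M(A)_e` of non-degenerate
modules generated by their `e`-fixed vectors. -/
def InjInClass (e : A) (I : Type u) [AddCommGroup I] [Module K I] [NUMod K A I] : Prop :=
  ∀ (X Y : Type u) [AddCommGroup X] [Module K X] [NUMod K A X]
      [AddCommGroup Y] [Module K Y] [NUMod K A Y],
    Nondeg K A X → aeSpan K e X = ⊤ → Nondeg K A Y → aeSpan K e Y = ⊤ →
    ∀ ι : X →ₗ[K] Y, IsAMap K A ι → Function.Injective ι →
    ∀ f : X →ₗ[K] I, IsAMap K A f → ∃ g : Y →ₗ[K] I, IsAMap K A g ∧ g ∘ₗ ι = f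

/-- `I` is an injective object of the category `M(A)` of non-degenerate modules. -/
def InjInCat (I : Type u) [AddCommGroup I] [Module K I] [NUMod K A I] : Prop :=
  ∀ (X Y : Type u) [AddCommGroup X] [Module K X] [NUMod K A X]
      [AddCommGroup Y] [Module K Y] [NUMod K A Y],
    Nondeg K A X → Nondeg K A Y →
    ∀ ι : X →ₗ[K] Y, IsAMap K A ι → Function.Injective ι →
    ∀ f : X →ₗ[K] I, IsAMap K A f → ∃ g : Y →ₗ[K] I, IsAMap K A g ∧ g ∘ₗ ι = f

/-- An idempotent `e` is left split if the inclusion `M(A)_e → M(A)` preserves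
injective objects. -/
def LeftSplit (e : A) : Prop :=
  ∀ (I : Type u) [AddCommGroup I] [Module K I] [NUMod K A I],
    Nondeg K A I → aeSpan K e I = ⊤ → InjInClass K A e I → InjInCat K A I

end Split

section Helpers

variable (K : Type u) [CommRing K]
variable (A : Type u) [NonUnitalRing A] [Module K A]
  [SMulCommClass K A A] [IsScalarTower K A A]

theorem zero_asmul {M : Type u} [AddCommGroup M] [Module K M] [NUMod K A M] (m : M) :
    (0 : A) • m = 0 := by
  have h := NUMod.add_asmul (K := K) (0 : A) 0 m
  rw [add_zero] at h
  exact add_left_cancel (show (0:A) • m + (0:A) • m = (0:A) • m + 0 by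
    rw [add_zero]; exact h.symm)

/-- The action of the unitization on a `NUMod`. -/
def uact {M : Type u} [AddCommGroup M] [Module K M] [NUMod K A M]
    (r : Unitization K A) (m : M) : M :=
  r.fst • m + r.snd • m

/-- The module structure over the unitization on a `NUMod`. -/
def uModule (M : Type u) [AddCommGroup M] [Module K M] [NUMod K A M] :
    Module (Unitization K A) M :=
  letI : SMul (Unitization K A) M := ⟨uact K A⟩
  Module.ofMinimalAxioms
    (fun r x y => by
      show uact K A r (x + y) = uact K A r x + uact K A r y
      simp only [uact, smul_add, NUMod.asmul_add]
      abel)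
    (fun r s x => by
      show uact K A (r + s) x = uact K A r x + uact K A s x
      simp only [uact, Unitization.fst_add, Unitization.snd_add, add_smul,
        NUMod.add_asmul]
      abel)
    (fun r s x => by
      show uact K A (r * s) x = uact K A r (uact K A s x)
      simp only [uact, Unitization.fst_mul, Unitization.snd_mul, NUMod.add_asmul,
        NUMod.mul_asmul, NUMod.asmul_ksmul, NUMod.ksmul_asmul, mul_smul, smul_add,
        NUMod.asmul_add]
      abel)
    (fun x => by
      show uact K A 1 x = x
      simp only [uact, Unitization.fst_one, Unitization.snd_one, one_smul,
        zero_asmul K A, add_zero])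

theorem uact_algebraMap {M : Type u} [AddCommGroup M] [Module K M] [NUMod K A M]
    (k : K) (m : M) : uact K A (algebraMap K (Unitization K A) k) m = k • m := by
  simp [uact, Unitization.algebraMap_eq_inl, zero_asmul K A]

theorem uact_inr {M : Type u} [AddCommGroup M] [Module K M] [NUMod K A M]
    (a : A) (m : M) : uact K A (a : Unitization K A) m = a • m := by
  simp [uact]

end Helpers
section Helpers2

variable (K : Type u) [CommRing K]
variable (A : Type u) [NonUnitalRing A] [Module K A]
  [SMulCommClass K A A] [IsScalarTower K A A]

/-- `K`-module structure on a module over the unitization. -/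
def rModuleK (E : Type u) [AddCommGroup E] [Module (Unitization K A) E] :
    Module K E :=
  Module.compHom E (algebraMap K (Unitization K A))

/-- `NUMod` structure on a module over the unitization. -/
def rNUMod (E : Type u) [AddCommGroup E] [Module (Unitization K A) E] :
    letI := rModuleK K A E
    NUMod K A E :=
  letI := rModuleK K A E
  { smul := fun a x => (a : Unitization K A) • x
    asmul_add := fun a x y => smul_add _ x y
    add_asmul := fun a b x => by
      show ((↑(a + b) : Unitization K A)) • x = _
      rw [Unitization.inr_add, add_smul]; rfl
    mul_asmul := fun a b x => by
      show ((↑(a * b) : Unitization K A)) • x = _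
      rw [Unitization.inr_mul, mul_smul]; rfl
    asmul_ksmul := fun k a x => by
      show (↑a : Unitization K A) • (algebraMap K (Unitization K A) k • x) =
        algebraMap K (Unitization K A) k • ((↑a : Unitization K A) • x)
      rw [← mul_smul, ← mul_smul, Algebra.commutes]
    ksmul_asmul := fun k a x => by
      show ((↑(k • a) : Unitization K A)) • x =
        algebraMap K (Unitization K A) k • ((↑a : Unitization K A) • x)
      rw [Unitization.inr_smul, Algebra.smul_def, mul_smul] }

end Helpers2
section Helpers3

variable (K : Type u) [CommRing K]
variable (A : Type u) [NonUnitalRing A] [Module K A]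
  [SMulCommClass K A A] [IsScalarTower K A A]

/-- `NUMod` structure on an `A`-stable submodule. -/
def subNUMod {M : Type u} [AddCommGroup M] [Module K M] [NUMod K A M]
    (S : Submodule K M) (hS : AStable K A S) : NUMod K A ↥S where
  smul a x := ⟨a • (x : M), hS a x x.2⟩
  asmul_add a x y := Subtype.ext (NUMod.asmul_add a (x : M) y)
  add_asmul a b x := Subtype.ext (NUMod.add_asmul a b (x : M))
  mul_asmul a b x := Subtype.ext (NUMod.mul_asmul a b (x : M))
  asmul_ksmul k a x := Subtype.ext (NUMod.asmul_ksmul k a (x : M))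
  ksmul_asmul k a x := Subtype.ext (NUMod.ksmul_asmul k a (x : M))

theorem aeSpan_stable (e : A) (M : Type u) [AddCommGroup M] [Module K M]
    [NUMod K A M] : AStable K A (aeSpan K e M) := by
  intro a m hm
  induction hm using Submodule.span_induction with
  | mem x hx =>
      obtain ⟨b, n, rfl⟩ := hx
      rw [← NUMod.mul_asmul]
      exact Submodule.subset_span ⟨a * b, n, rfl⟩
  | zero => rw [asmul_zero K A]; exact Submodule.zero_mem _
  | add x y _ _ hx hy =>
      rw [NUMod.asmul_add]; exact Submodule.add_mem _ hx hy
  | smul k x _ hx =>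
      rw [NUMod.asmul_ksmul]; exact Submodule.smul_mem _ _ hx

/-- Every element of `AeM` is fixed by some idempotent, provided `A` is idempotented. -/
theorem aeSpan_pointwise_nondeg (hA : Idempotented A) (e : A) (he : e * e = e)
    (M : Type u) [AddCommGroup M] [Module K M] [NUMod K A M] :
    ∀ m ∈ aeSpan K e M, ∃ f : A, f * f = f ∧ f • m = m := by
  intro m hm
  induction hm using Submodule.span_induction with
  | mem x hx =>
      obtain ⟨b, n, rfl⟩ := hx
      obtain ⟨f, hf, hfb, _⟩ := hA.1 b
      exact ⟨f, hf, by rw [← NUMod.mul_asmul, hfb]⟩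
  | zero => exact ⟨e, he, asmul_zero K A e⟩
  | add x y _ _ hx hy =>
      obtain ⟨f₁, hf₁, hx⟩ := hx
      obtain ⟨f₂, hf₂, hy⟩ := hy
      obtain ⟨f, hf, hff₁, _, hff₂, _⟩ := hA.2 f₁ f₂ hf₁ hf₂
      refine ⟨f, hf, ?_⟩
      rw [NUMod.asmul_add]
      rw [show f • x = x by rw [← hx, ← NUMod.mul_asmul, hff₁, hx]]
      rw [show f • y = y by rw [← hy, ← NUMod.mul_asmul, hff₂, hy]]
  | smul k x _ hx =>
      obtain ⟨f, hf, hx⟩ := hx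
      exact ⟨f, hf, by rw [NUMod.asmul_ksmul, hx]⟩

/-- generators of `aeSpan` are themselves in the image of `e`-smashing of `aeSpan`. -/
theorem aeSpan_subtype_top (e : A) (he : e * e = e) (M : Type u) [AddCommGroup M]
    [Module K M] [NUMod K A M] :
    letI := subNUMod K A (aeSpan K e M) (aeSpan_stable K A e M)
    aeSpan K e ↥(aeSpan K e M) = ⊤ := by
  letI := subNUMod K A (aeSpan K e M) (aeSpan_stable K A e M)
  have key : ∀ m ∈ aeSpan K e M,
      m ∈ Submodule.map (aeSpan K e M).subtype (aeSpan K e ↥(aeSpan K e M)) := by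
    intro m hm
    induction hm using Submodule.span_induction with
    | mem x hx =>
        obtain ⟨a, n, rfl⟩ := hx
        have hen : e • n ∈ aeSpan K e M := Submodule.subset_span ⟨e, n, by
          rw [← NUMod.mul_asmul, he]⟩
        refine ⟨a • (e • (⟨e • n, hen⟩ : ↥(aeSpan K e M))),
          Submodule.subset_span ⟨a, ⟨e • n, hen⟩, rfl⟩, ?_⟩
        have h2 : a • (e • (e • n)) = a • (e • n) := by
          rw [← NUMod.mul_asmul e e n, he]
        exact h2
    | zero => exact Submodule.zero_mem _
    | add x y _ _ hx hy => exact Submodule.add_mem _ hx hy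
    | smul k x _ hx => exact Submodule.smul_mem _ _ hx
  rw [Submodule.eq_top_iff']
  intro x
  obtain ⟨y, hy, hyx⟩ := Submodule.mem_map.mp (key (x : M) x.2)
  have hyx' : y = x := Subtype.ext hyx
  subst hyx'
  exact hy

end Helpers3
section Helpers4

variable (K : Type u) [CommRing K]
variable (A : Type u) [NonUnitalRing A] [Module K A]
  [SMulCommClass K A A] [IsScalarTower K A A]

theorem image_mem_aeSpan (e : A) {X E : Type u} [AddCommGroup X] [Module K X]
    [NUMod K A X] [AddCommGroup E] [Module K E] [NUMod K A E]
    (g : X →ₗ[K] E) (hg : IsAMap K A g) {x : X} (hx : x ∈ aeSpan K e X) :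
    g x ∈ aeSpan K e E := by
  induction hx using Submodule.span_induction with
  | mem x hx =>
      obtain ⟨a, n, rfl⟩ := hx
      rw [hg, hg]
      exact Submodule.subset_span ⟨a, g n, rfl⟩
  | zero => rw [map_zero]; exact Submodule.zero_mem _
  | add x y _ _ hx hy => rw [map_add]; exact Submodule.add_mem _ hx hy
  | smul k x _ hx => rw [map_smul]; exact Submodule.smul_mem _ _ hx

/-- An embedding of `N` into a module which is injective for all `NUMod`s. -/
structure NUInj (N : Type u) [AddCommGroup N] [Module K N] [NUMod K A N] :
    Type (u + 1) where
  E : Type u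
  [iA : AddCommGroup E]
  [iM : Module K E]
  [iN : NUMod K A E]
  j : N →ₗ[K] E
  hj : IsAMap K A j
  inj : Function.Injective j
  ext : ∀ (X Y : Type u) [AddCommGroup X] [Module K X] [NUMod K A X]
      [AddCommGroup Y] [Module K Y] [NUMod K A Y],
    ∀ ι : X →ₗ[K] Y, IsAMap K A ι → Function.Injective ι →
    ∀ f : X →ₗ[K] E, IsAMap K A f → ∃ g : Y →ₗ[K] E, IsAMap K A g ∧ g ∘ₗ ι = f

open CategoryTheory in
theorem exists_nuInj (N : Type u) [AddCommGroup N] [Module K N] [NUMod K A N] :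
    Nonempty (NUInj K A N) := by
  letI : Module (Unitization K A) N := uModule K A N
  let C : ModuleCat (Unitization K A) := ModuleCat.of (Unitization K A) N
  let Ecat : ModuleCat (Unitization K A) := Injective.under C
  let E : Type u := Ecat.carrier
  haveI hEinj : Module.Injective (Unitization K A) E :=
    Module.injective_module_of_injective_object _ _
      (inj := Injective.injective_under C)
  letI iM : Module K E := rModuleK K A E
  letI iN : NUMod K A E := rNUMod K A E
  -- the embedding, as a linear map over the unitization
  let jR : N →ₗ[Unitization K A] E := (Injective.ι C).hom
  have hjR : Function.Injective jR :=
    (ModuleCat.mono_iff_injective (Injective.ι C)).mp (Injective.ι_mono C)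
  -- lemma: on a NUMod with the uModule structure, `algebraMap k` acts as `k` and `inr a` as `a`
  have hksmul : ∀ (X : Type u) [AddCommGroup X] [Module K X] [NUMod K A X],
      ∀ (k : K) (x : X),
        (letI := uModule K A X; algebraMap K (Unitization K A) k • x) = k • x := by
    intro X _ _ _ k x
    exact uact_algebraMap K A k x
  have hasmul : ∀ (X : Type u) [AddCommGroup X] [Module K X] [NUMod K A X],
      ∀ (a : A) (x : X),
        (letI := uModule K A X; ((a : Unitization K A) • x : X)) = a • x := by
    intro X _ _ _ a x
    exact uact_inr K A a x
  -- on E, the `K`- and `A`-actions are by definition given through the unitization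
  have hksmulE : ∀ (k : K) (x : E), k • x = algebraMap K (Unitization K A) k • x :=
    fun k x => rfl
  have hasmulE : ∀ (a : A) (x : E), a • x = (a : Unitization K A) • x :=
    fun a x => rfl
  -- promote K-linear A-maps between NUMods to Unitization-linear maps
  have promote2 : ∀ (X Y : Type u) [AddCommGroup X] [Module K X] [NUMod K A X]
      [AddCommGroup Y] [Module K Y] [NUMod K A Y],
      ∀ f : X →ₗ[K] Y, IsAMap K A f →
        ∃ fR : (letI := uModule K A X; letI := uModule K A Y;
            X →ₗ[Unitization K A] Y),
          ∀ x : X, fR x = f x := by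
    intro X Y _ _ _ _ _ _ f hf
    letI := uModule K A X
    letI := uModule K A Y
    refine ⟨⟨⟨f, f.map_add⟩, ?_⟩, fun x => rfl⟩
    intro r x
    show f (uact K A r x) = uact K A r (f x)
    rw [uact, uact, map_add, f.map_smul, hf]
  -- promote K-linear A-maps into E to Unitization-linear maps
  have promoteE : ∀ (Y : Type u) [AddCommGroup Y] [Module K Y] [NUMod K A Y],
      ∀ f : Y →ₗ[K] E, IsAMap K A f →
        ∃ fR : (letI := uModule K A Y; Y →ₗ[Unitization K A] E),
          ∀ y : Y, fR y = f y := by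
    intro Y _ _ _ f hf
    letI := uModule K A Y
    refine ⟨⟨⟨f, f.map_add⟩, ?_⟩, fun y => rfl⟩
    intro r y
    show f (uact K A r y) = r • f y
    have : r • f y = (Unitization.inl r.fst : Unitization K A) • f y + (r.snd : Unitization K A) • f y := by
      rw [← add_smul, Unitization.inl_fst_add_inr_snd_eq]
    rw [this, uact, map_add, f.map_smul, hf]
    rfl
  -- demote Unitization-linear maps to K-linear A-maps
  have demote : ∀ (Y : Type u) [AddCommGroup Y] [Module K Y] [NUMod K A Y],
      ∀ hR : (letI := uModule K A Y; Y →ₗ[Unitization K A] E),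
        ∃ h : Y →ₗ[K] E, IsAMap K A h ∧ ∀ y : Y, h y = hR y := by
    intro Y _ _ _ hR
    letI := uModule K A Y
    refine ⟨⟨⟨hR, hR.map_add⟩, ?_⟩, ?_, fun y => rfl⟩
    · intro k y
      show hR (k • y) = k • hR y
      rw [← hksmul Y k y, hR.map_smul, hksmulE]
    · intro a y
      show hR (a • y) = a • hR y
      rw [← hasmul Y a y, hR.map_smul, hasmulE]
  obtain ⟨j, hjA, hjval⟩ := demote N jR
  refine ⟨⟨E, j, hjA, ?_, ?_⟩⟩
  · intro x y hxy
    apply hjR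
    rw [← hjval, ← hjval, hxy]
  · intro X Y _ _ _ _ _ _ ι hι hιinj f hf
    letI := uModule K A X
    letI := uModule K A Y
    obtain ⟨fR, hfR⟩ := promoteE X f hf
    obtain ⟨ιR, hιR⟩ := promote2 X Y ι hι
    have hιRinj : Function.Injective ιR := by
      intro x y hxy
      apply hιinj
      rw [← hιR, ← hιR]
      exact hxy
    obtain ⟨hR, hhR⟩ := hEinj.out ιR hιRinj fR
    obtain ⟨g, hgA, hgval⟩ := demote Y hR
    refine ⟨g, hgA, ?_⟩
    apply LinearMap.ext
    intro x
    show g (ι x) = f x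
    rw [hgval, ← hιR, hhR, hfR]

end Helpers4
/-- for a left special and left split idempotent `e` of an idempotented
algebra `A` and any non-degenerate `A`-module `M`, the short exact sequence
`0 → AeM → M → M/AeM → 0` splits: `AeM` admits an `A`-stable complement `C` in `M`
(so `M ≅ AeM ⊕ M/AeM`), and `C` is killed by `e`; hence `M(A)` decomposes as the
direct sum of `M(A)_e` and `M(A)_e^⊥ = {M | eM = 0}`. -/
theorem split_decomposition
    {K A : Type u} [CommRing K] [NonUnitalRing A] [Module K A]
    [SMulCommClass K A A] [IsScalarTower K A A]
    (hA : Idempotented A) (e : A) (he : e * e = e)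
    (hsp : LeftSpecial K A e) (hsplit : LeftSplit K A e)
    (M : Type u) [AddCommGroup M] [Module K M] [NUMod K A M] (hM : Nondeg K A M) :
    ∃ C : Submodule K M, AStable K A C ∧ IsCompl (aeSpan K e M) C ∧
      ∀ c ∈ C, e • c = 0 := by
  classical
  letI instN : NUMod K A ↥(aeSpan K e M) :=
    subNUMod K A (aeSpan K e M) (aeSpan_stable K A e M)
  have hNnd : Nondeg K A ↥(aeSpan K e M) := by
    intro x
    obtain ⟨f, hf1, hf2⟩ := hM (x : M)
    exact ⟨f, hf1, Subtype.ext hf2⟩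
  have hNtop : aeSpan K e ↥(aeSpan K e M) = ⊤ := aeSpan_subtype_top K A e he M
  have hNincl : IsAMap K A (aeSpan K e M).subtype := fun a m => rfl
  obtain ⟨Ei⟩ := exists_nuInj K A ↥(aeSpan K e M)
  letI := Ei.iA
  letI := Ei.iM
  letI := Ei.iN
  letI instIe : NUMod K A ↥(aeSpan K e Ei.E) :=
    subNUMod K A (aeSpan K e Ei.E) (aeSpan_stable K A e Ei.E)
  have hIend : Nondeg K A ↥(aeSpan K e Ei.E) := by
    intro x
    obtain ⟨f, hf1, hf2⟩ := aeSpan_pointwise_nondeg K A hA e he Ei.E (x : Ei.E) x.2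
    exact ⟨f, hf1, Subtype.ext hf2⟩
  have hIetop : aeSpan K e ↥(aeSpan K e Ei.E) = ⊤ := aeSpan_subtype_top K A e he Ei.E
  -- the subcategory injectivity of `Ae·E`
  have hclass : InjInClass K A e ↥(aeSpan K e Ei.E) := by
    intro X Y _ _ _ _ _ _ hXnd hXtop hYnd hYtop ι hι hιinj f hf
    obtain ⟨h, hhA, hhι⟩ := Ei.ext X Y ι hι hιinj ((aeSpan K e Ei.E).subtype ∘ₗ f)
      (fun a m => by
        show ((f (a • m) : ↥(aeSpan K e Ei.E)) : Ei.E) = a • ((f m : ↥(aeSpan K e Ei.E)) : Ei.E)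
        rw [hf]
        rfl)
    have hrange : ∀ y : Y, h y ∈ aeSpan K e Ei.E := by
      intro y
      have hy : y ∈ aeSpan K e Y := hYtop ▸ Submodule.mem_top
      exact image_mem_aeSpan K A e h hhA hy
    refine ⟨h.codRestrict _ hrange, ?_, ?_⟩
    · intro a m
      apply Subtype.ext
      show h (a • m) = a • h m
      exact hhA a m
    · apply LinearMap.ext
      intro x
      apply Subtype.ext
      show h (ι x) = ((f x : ↥(aeSpan K e Ei.E)) : Ei.E)
      exact LinearMap.congr_fun hhι x
  have hcat : InjInCat K A ↥(aeSpan K e Ei.E) := hsplit _ hIend hIetop hclass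
  -- the corestriction of the embedding `j : AeM → E` to `Ae·E`
  have hjrange : ∀ x : ↥(aeSpan K e M), Ei.j x ∈ aeSpan K e Ei.E := by
    intro x
    have hx : x ∈ aeSpan K e ↥(aeSpan K e M) := hNtop ▸ Submodule.mem_top
    exact image_mem_aeSpan K A e Ei.j Ei.hj hx
  set f0 : ↥(aeSpan K e M) →ₗ[K] ↥(aeSpan K e Ei.E) :=
    Ei.j.codRestrict _ hjrange with hf0def
  have hf0A : IsAMap K A f0 := fun a m => Subtype.ext (Ei.hj a m)
  have hf0inj : Function.Injective f0 := fun x y hxy =>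
    Ei.inj (congrArg Subtype.val hxy)
  obtain ⟨g, hgA, hgcomp⟩ := hcat ↥(aeSpan K e M) M hNnd hM
    (aeSpan K e M).subtype hNincl (Submodule.injective_subtype _) f0 hf0A
  -- special: the range of `g` is contained in `f0(AeM)`
  have hbot : AStable K A (⊥ : Submodule K ↥(aeSpan K e Ei.E)) := by
    intro a x hx
    rw [Submodule.mem_bot] at hx ⊢
    rw [hx, asmul_zero K A]
  have hrgstable : AStable K A (LinearMap.range g) := by
    intro a x hx
    obtain ⟨m, rfl⟩ := hx
    exact ⟨a • m, hgA a m⟩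
  have hspec := hsp ↥(aeSpan K e Ei.E) hIend hIetop ⊥ (LinearMap.range g)
    hbot hrgstable bot_le
  rw [bot_sup_eq] at hspec
  have hgen : Submodule.span K {x : ↥(aeSpan K e Ei.E) |
      ∃ a : A, ∃ m ∈ LinearMap.range g, a • (e • m) = x} ≤
      LinearMap.range (g ∘ₗ (aeSpan K e M).subtype) := by
    rw [Submodule.span_le]
    rintro x ⟨a, m, hm, rfl⟩
    obtain ⟨y, rfl⟩ := hm
    have hmem : a • (e • y) ∈ aeSpan K e M := Submodule.subset_span ⟨a, y, rfl⟩
    refine ⟨⟨a • (e • y), hmem⟩, ?_⟩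
    show g (a • (e • y)) = a • (e • g y)
    rw [hgA, hgA]
  have hginN : ∀ m : M, ∃ n : ↥(aeSpan K e M), g (n : M) = g m := by
    intro m
    have hmem : g m ∈ LinearMap.range (g ∘ₗ (aeSpan K e M).subtype) :=
      hgen (hspec (LinearMap.mem_range_self g m))
    obtain ⟨n, hn⟩ := hmem
    exact ⟨n, hn⟩
  have hgval : ∀ n : ↥(aeSpan K e M), g (n : M) = f0 n :=
    fun n => LinearMap.congr_fun hgcomp n
  refine ⟨LinearMap.ker g, ?_, ⟨?_, ?_⟩, ?_⟩
  · intro a m hm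
    rw [LinearMap.mem_ker] at hm ⊢
    rw [hgA, hm, asmul_zero K A]
  · rw [Submodule.disjoint_def]
    intro x hxN hxK
    have h0 : g x = 0 := LinearMap.mem_ker.mp hxK
    have h1 : f0 ⟨x, hxN⟩ = 0 := by rw [← hgval ⟨x, hxN⟩]; exact h0
    have h2 : (⟨x, hxN⟩ : ↥(aeSpan K e M)) = 0 := by
      apply hf0inj
      rw [h1, map_zero]
    exact congrArg Subtype.val h2
  · rw [codisjoint_iff, Submodule.eq_top_iff']
    intro m
    obtain ⟨n, hn⟩ := hginN m
    refine Submodule.mem_sup.mpr ⟨(n : M), n.2, m - (n : M), ?_, by abel⟩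
    rw [LinearMap.mem_ker, map_sub, hn, sub_self]
  · intro c hc
    have hec : e • c ∈ aeSpan K e M := Submodule.subset_span ⟨e, c, by
      rw [← NUMod.mul_asmul, he]⟩
    have h0 : g (e • c) = 0 := by
      rw [hgA e c, LinearMap.mem_ker.mp hc, asmul_zero K A]
    have h1 : f0 ⟨e • c, hec⟩ = 0 := by rw [← hgval ⟨e • c, hec⟩]; exact h0
    have h2 : (⟨e • c, hec⟩ : ↥(aeSpan K e M)) = 0 := by
      apply hf0inj
      rw [h1, map_zero]
    exact congrArg Subtype.val h2
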